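/- The negative log-likelihood is bounded by the surrogate loss: for any policy $\pi$ and any family of goal-conditioned policies $(\pi^{\tilde x})_{\tilde x \in \mathcal{D}}$, $L(\pi) := \frac{1}{N} \sum_{\tilde x \in \mathcal{D}} -\log p_{H+1}^\pi(\tilde x) \le \frac{1}{N}\sum_{\tilde x \in \mathcal{D}} \left( \mathbb{E}_{\pi^{\tilde x}}\left[-\log p_H(\tilde x \mid x_H, y_H)\right] + \KL(p^{\pi^{\tilde x}}, p^\pi) \right)$. -/

import Mathlib

open Finset Real

/-- Gibbs / ELBO inequality: `-log (∑ w) ≤ ∑ q log(q/w)` for a probability vector `q`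
absolutely continuous w.r.t. the nonnegative weights `w`. -/
lemma gibbs_key {Ω : Type*} [Fintype Ω] (w q : Ω → ℝ) (hw : ∀ ω, 0 ≤ w ω)
    (hq0 : ∀ ω, 0 ≤ q ω) (hq1 : ∑ ω, q ω = 1) (habs : ∀ ω, w ω = 0 → q ω = 0) :
    - Real.log (∑ ω, w ω) ≤ ∑ ω, q ω * Real.log (q ω / w ω) := by
  classical
  set T : Finset Ω := Finset.univ.filter (fun ω => 0 < q ω) with hT
  obtain ⟨ω₀, hω₀⟩ : ∃ ω, 0 < q ω := by
    by_contra h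
    push_neg at h
    have : ∑ ω, q ω = 0 := Finset.sum_eq_zero fun ω _ => le_antisymm (h ω) (hq0 ω)
    simp [this] at hq1
  have hω₀T : ω₀ ∈ T := by simp [hT, hω₀]
  have hwpos : ∀ ω ∈ T, 0 < w ω := by
    intro ω hω
    simp only [hT, Finset.mem_filter] at hω
    rcases (hw ω).lt_or_eq with h | h
    · exact h
    · exact absurd (habs ω h.symm) (ne_of_gt hω.2)
  have hqT : ∑ ω ∈ T, q ω = 1 := by
    rw [← hq1]
    exact Finset.sum_subset (Finset.subset_univ T) (fun ω _ hω => by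
      rcases (hq0 ω).lt_or_eq with h | h
      · exact absurd (by simp [hT, h]) hω
      · exact h.symm)
  -- Jensen on log
  have hjensen := (strictConcaveOn_log_Ioi.concaveOn).le_map_sum
    (t := T) (w := q) (p := fun ω => w ω / q ω)
    (fun ω hω => (hq0 ω)) hqT
    (fun ω hω => by
      have hqpos : 0 < q ω := by simpa [hT] using hω
      exact Set.mem_Ioi.mpr (div_pos (hwpos ω hω) hqpos))
  have hsum_eq : ∑ ω ∈ T, q ω • (w ω / q ω) = ∑ ω ∈ T, w ω := by
    apply Finset.sum_congr rfl
    intro ω hω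
    have hqpos : 0 < q ω := by simpa [hT] using hω
    rw [smul_eq_mul]
    field_simp
  have hTwpos : 0 < ∑ ω ∈ T, w ω := by
    have := Finset.single_le_sum (f := w) (fun ω hω => hw ω) hω₀T
    have hw0 : 0 < w ω₀ := hwpos ω₀ hω₀T
    linarith
  have hTw_le : ∑ ω ∈ T, w ω ≤ ∑ ω, w ω :=
    Finset.sum_le_sum_of_subset_of_nonneg (Finset.subset_univ T) (fun ω _ _ => hw ω)
  have hlogle : Real.log (∑ ω ∈ T, w ω) ≤ Real.log (∑ ω, w ω) :=
    Real.log_le_log hTwpos hTw_le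
  have hmain : ∑ ω ∈ T, q ω * Real.log (w ω / q ω) ≤ Real.log (∑ ω, w ω) := by
    calc ∑ ω ∈ T, q ω * Real.log (w ω / q ω)
        = ∑ ω ∈ T, q ω • Real.log (w ω / q ω) := by simp [smul_eq_mul]
      _ ≤ Real.log (∑ ω ∈ T, q ω • (w ω / q ω)) := hjensen
      _ = Real.log (∑ ω ∈ T, w ω) := by rw [hsum_eq]
      _ ≤ Real.log (∑ ω, w ω) := hlogle
  have hflip : ∑ ω, q ω * Real.log (q ω / w ω) = - ∑ ω ∈ T, q ω * Real.log (w ω / q ω) := by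
    rw [← Finset.sum_neg_distrib]
    rw [← Finset.sum_subset (Finset.subset_univ T) (fun ω _ hω => by
      rcases (hq0 ω).lt_or_eq with h | h
      · exact absurd (by simp [hT, h]) hω
      · simp [← h])]
    apply Finset.sum_congr rfl
    intro ω hω
    have hqpos : 0 < q ω := by simpa [hT] using hω
    rw [Real.log_div (ne_of_gt hqpos) (ne_of_gt (hwpos ω hω)),
      Real.log_div (ne_of_gt (hwpos ω hω)) (ne_of_gt hqpos)]
    ring
  rw [hflip]
  linarith

/-- the negative log-likelihood `L(π)` is bounded by the surrogate loss:
for any policy `π` (with trajectory distribution `pπ`) and any family of goal-conditioned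
trajectory distributions `(q xt)_{xt ∈ D}` (each absolutely continuous w.r.t. `pπ`),
`(1/N) ∑_{xt∈D} -log p_{H+1}^π(xt) ≤ (1/N) ∑_{xt∈D} (E_{q xt}[-log p_H(xt|x_H,y_H)] + KL(q xt, pπ))`,
where `p_{H+1}^π(xt) = E_π[p_H(xt|x_H,y_H)]`. -/
theorem stmt3 {Ω X Y : Type*} [Fintype Ω]
    (D : Finset X) (N : ℕ) (hN : D.card = N) (hN0 : 0 < N)
    (xH : Ω → X) (yH : Ω → Y) (pH : X → Y → X → ℝ)
    (hpH : ∀ x y x', 0 < pH x y x')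
    (pπ : Ω → ℝ) (hpπ0 : ∀ ω, 0 ≤ pπ ω) (hpπ1 : ∑ ω, pπ ω = 1)
    (q : X → Ω → ℝ) (hq0 : ∀ xt ω, 0 ≤ q xt ω) (hq1 : ∀ xt, ∑ ω, q xt ω = 1)
    (habs : ∀ xt ω, pπ ω = 0 → q xt ω = 0) :
    (1 / N : ℝ) * ∑ xt ∈ D, (- Real.log (∑ ω, pπ ω * pH (xH ω) (yH ω) xt)) ≤
    (1 / N : ℝ) * ∑ xt ∈ D,
      ((∑ ω, q xt ω * (- Real.log (pH (xH ω) (yH ω) xt))) +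
        ∑ ω, q xt ω * Real.log (q xt ω / pπ ω)) := by
  apply mul_le_mul_of_nonneg_left _ (by positivity)
  apply Finset.sum_le_sum
  intro xt _
  set w : Ω → ℝ := fun ω => pπ ω * pH (xH ω) (yH ω) xt with hw
  have hw0 : ∀ ω, 0 ≤ w ω := fun ω => mul_nonneg (hpπ0 ω) (hpH _ _ _).le
  have habs' : ∀ ω, w ω = 0 → q xt ω = 0 := by
    intro ω h
    have : pπ ω = 0 := by
      rcases mul_eq_zero.mp h with h' | h'
      · exact h'
      · exact absurd h' (ne_of_gt (hpH _ _ _))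
    exact habs xt ω this
  have hkey := gibbs_key w (q xt) hw0 (hq0 xt) (hq1 xt) habs'
  refine hkey.trans (le_of_eq ?_)
  rw [← Finset.sum_add_distrib]
  apply Finset.sum_congr rfl
  intro ω _
  rcases (hq0 xt ω).lt_or_eq with h | h
  · have hpπpos : 0 < pπ ω := by
      rcases (hpπ0 ω).lt_or_eq with h' | h'
      · exact h'
      · exact absurd (habs xt ω h'.symm) (ne_of_gt h)
    rw [hw, Real.log_div (ne_of_gt h) (ne_of_gt (mul_pos hpπpos (hpH _ _ _))),
      Real.log_div (ne_of_gt h) (ne_of_gt hpπpos),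
      Real.log_mul (ne_of_gt hpπpos) (ne_of_gt (hpH _ _ _))]
    ring
  · simp [← h]
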